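/- arXiv:2404.16648 — 2 statements merged into one kernel-verified Lean document; each statement's English description precedes it below -/
import Mathlib

section
/- Consider a 1D grid with a coarse region and a fine region (refinement ratio 2), where each coarse face flux adjacent to the fine region is replaced (refluxed) by the time- and space-average of the corresponding fine fluxes. Then the composite flux-form update conserves the total integrated quantity Σ over the whole domain exactly: the mismatch between coarse and fine fluxes at the coarse-fine interface is exactly cancelled by the refluxing correction. -/
open Finset

/-- Conservation of a composite coarse/fine (refinement ratio 2) flux-form
update on a periodic 1D domain: the coarse cells `0,…,K−1` of width `Δx` take
one step of size `Δt`; the fine cells `0,…,2L−1` of width `Δx/2` take two steps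
of size `Δt/2` with fluxes `f1` (first substep) and `f2` (second substep).
Each coarse face flux adjacent to the fine region is replaced (refluxed) by the
time-average of the corresponding fine fluxes.  Then the total integrated
quantity over the whole domain is exactly conserved. -/
theorem amr_refluxing_conserves_total_ratio2
    (K L : ℕ) (hK : 0 < K) (hL : 0 < L)
    (Δt Δx : ℝ) (hΔx : 0 < Δx) (hΔt : 0 < Δt)
    (qc qc' : ℕ → ℝ)            -- coarse cell values, before and after
    (qf qf' qf'' : ℕ → ℝ)        -- fine cell values: initial, after substep 1, 2
    (Fc f1 f2 : ℕ → ℝ)           -- coarse face fluxes; fine face fluxes per substep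
    -- refluxing: coarse fluxes at the two coarse-fine interfaces (the domain is
    -- periodic, so face 0 is the right end of the fine region) are the
    -- time-averaged fine fluxes
    (hreflux_right : Fc K = (Δt / 2 * f1 0 + Δt / 2 * f2 0) / Δt)
    (hreflux_left : Fc 0 = (Δt / 2 * f1 (2 * L) + Δt / 2 * f2 (2 * L)) / Δt)
    -- coarse flux-form update
    (hcoarse : ∀ i < K, qc' i = qc i - (Δt / Δx) * (Fc (i + 1) - Fc i))
    -- two fine flux-form substeps
    (hfine1 : ∀ j < 2 * L, qf' j = qf j - ((Δt / 2) / (Δx / 2)) * (f1 (j + 1) - f1 j))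
    (hfine2 : ∀ j < 2 * L, qf'' j = qf' j - ((Δt / 2) / (Δx / 2)) * (f2 (j + 1) - f2 j)) :
    Δx * ∑ i ∈ range K, qc' i + (Δx / 2) * ∑ j ∈ range (2 * L), qf'' j =
      Δx * ∑ i ∈ range K, qc i + (Δx / 2) * ∑ j ∈ range (2 * L), qf j := by
  have h1 : ∑ i ∈ range K, qc' i =
      ∑ i ∈ range K, qc i - (Δt / Δx) * (Fc K - Fc 0) := by
    rw [Finset.sum_congr rfl (fun i hi => hcoarse i (mem_range.mp hi)),
      Finset.sum_sub_distrib, ← Finset.mul_sum, Finset.sum_range_sub]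
  have h2 : ∑ j ∈ range (2 * L), qf'' j =
      ∑ j ∈ range (2 * L), qf j
        - ((Δt / 2) / (Δx / 2)) * (f1 (2 * L) - f1 0)
        - ((Δt / 2) / (Δx / 2)) * (f2 (2 * L) - f2 0) := by
    have : ∀ j ∈ range (2 * L), qf'' j =
        qf j - ((Δt / 2) / (Δx / 2)) * (f1 (j + 1) - f1 j)
            - ((Δt / 2) / (Δx / 2)) * (f2 (j + 1) - f2 j) := by
      intro j hj
      rw [hfine2 j (mem_range.mp hj), hfine1 j (mem_range.mp hj)]
    rw [Finset.sum_congr rfl this, Finset.sum_sub_distrib, Finset.sum_sub_distrib,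
      ← Finset.mul_sum, ← Finset.mul_sum, Finset.sum_range_sub, Finset.sum_range_sub]
  rw [h1, h2, hreflux_right, hreflux_left]
  field_simp
  ring
end

section
/- Let q^{Ξᵢ} = Pⁱ q^{Ω_L} with Pⁱ = (M^{Ξᵢ})^{-1} S^{Ω_L→Ξᵢ} be the L²-orthogonal projection of a polynomial trace from an element face onto mortar Ξᵢ (i = 1, 2 partitioning the face), and let the reverse projection be q^{Ω_L} = Σᵢ s_{Ξᵢ} (M^{Ω_L})^{-1} (S^{Ω_L→Ξᵢ})ᵀ q^{Ξᵢ} with s_{Ξᵢ} the ratio of mortar length to face length. Then for any polynomial flux values F^{Ξᵢ} on the mortars and any polynomial test trace v on the face, the projected flux satisfies ∫_{face} v · (Σᵢ back-projection of F^{Ξᵢ}) = Σᵢ ∫_{Ξᵢ} (projection of v onto Ξᵢ) · F^{Ξᵢ}; in particular, taking v ≡ 1, the total flux through the face equals the sum of the total fluxes through the two mortars (flux conservation of the mortar method). -/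
open Matrix

/-- Flux conservation of the mortar method (1D dG spectral-element setting).
`MΩ` is the (symmetric, invertible) mass matrix of the element face, `MΞ i` the
mass matrix of mortar `Ξᵢ`, `S i` the mixed mass matrix with entries
`(S i)ⱼₖ = ∫_{Ξᵢ} φⱼ^{Ω_L}(ξ(x)) φₖ^{Ξᵢ}(x) dx`, and `s i = 1/2` the ratio of
mortar length to face length.  For any mortar flux coefficient vectors `F i`
and any test-trace coefficient vector `v` on the face, the face integral of `v`
against the back-projected flux `Σᵢ s i • MΩ⁻¹ (S i) (F i)` equals the sum over
the mortars of the integral of the projected test trace `(MΞ i)⁻¹ (S i)ᵀ v`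
against `F i`; in particular (taking `v` the coefficients of the constant `1`)
the total flux through the face equals the sum of the fluxes through the two
mortars. -/
theorem mortar_method_flux_conservation
    (N : ℕ)
    (MΩ : Matrix (Fin (N + 1)) (Fin (N + 1)) ℝ)
    (MΞ : Fin 2 → Matrix (Fin (N + 1)) (Fin (N + 1)) ℝ)
    (S : Fin 2 → Matrix (Fin (N + 1)) (Fin (N + 1)) ℝ)
    (s : Fin 2 → ℝ) (hs : ∀ i, s i = 1 / 2)
    (hMΩsym : MΩ.IsSymm) (hMΩ : IsUnit MΩ)
    (hMΞsym : ∀ i, (MΞ i).IsSymm) (hMΞ : ∀ i, IsUnit (MΞ i))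
    (F : Fin 2 → Fin (N + 1) → ℝ) :
    (∀ v : Fin (N + 1) → ℝ,
      v ⬝ᵥ (MΩ *ᵥ ∑ i, s i • (MΩ⁻¹ *ᵥ (S i *ᵥ F i))) =
        ∑ i, s i * (((MΞ i)⁻¹ *ᵥ ((S i)ᵀ *ᵥ v)) ⬝ᵥ (MΞ i *ᵥ F i))) ∧
    ((fun _ => (1 : ℝ)) ⬝ᵥ (MΩ *ᵥ ∑ i, s i • (MΩ⁻¹ *ᵥ (S i *ᵥ F i))) =
      ∑ i, s i * (((MΞ i)⁻¹ *ᵥ ((S i)ᵀ *ᵥ (fun _ => (1 : ℝ)))) ⬝ᵥ (MΞ i *ᵥ F i))) := by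
  have key : ∀ v : Fin (N + 1) → ℝ,
      v ⬝ᵥ (MΩ *ᵥ ∑ i, s i • (MΩ⁻¹ *ᵥ (S i *ᵥ F i))) =
        ∑ i, s i * (((MΞ i)⁻¹ *ᵥ ((S i)ᵀ *ᵥ v)) ⬝ᵥ (MΞ i *ᵥ F i)) := by
    intro v
    have hΩdet : IsUnit MΩ.det := (Matrix.isUnit_iff_isUnit_det _).mp hMΩ
    have hL : MΩ *ᵥ (∑ i, s i • (MΩ⁻¹ *ᵥ (S i *ᵥ F i))) =
        ∑ i, s i • (S i *ᵥ F i) := by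
      rw [Fin.sum_univ_two, Fin.sum_univ_two, Matrix.mulVec_add]
      congr 1 <;> rw [Matrix.mulVec_smul, Matrix.mulVec_mulVec, Matrix.mulVec_mulVec,
        Matrix.mul_nonsing_inv _ hΩdet, Matrix.one_mul]
    have hR : ∀ i, ((MΞ i)⁻¹ *ᵥ ((S i)ᵀ *ᵥ v)) ⬝ᵥ (MΞ i *ᵥ F i) = v ⬝ᵥ (S i *ᵥ F i) := by
      intro i
      have hΞdet : IsUnit (MΞ i).det := (Matrix.isUnit_iff_isUnit_det _).mp (hMΞ i)
      rw [Matrix.dotProduct_mulVec, Matrix.vecMul_mulVec, Matrix.vecMul_mulVec,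
        Matrix.transpose_transpose, Matrix.transpose_nonsing_inv, (hMΞsym i).eq,
        Matrix.nonsing_inv_mul _ hΞdet, Matrix.mul_one, ← Matrix.dotProduct_mulVec]
    rw [hL, Fin.sum_univ_two, Fin.sum_univ_two, dotProduct_add, hR 0, hR 1,
      dotProduct_smul, dotProduct_smul, smul_eq_mul, smul_eq_mul]
  exact ⟨key, key _⟩
end
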